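/- arXiv:2601.21519 — 4 statements merged into one kernel-verified Lean document; each statement's English description precedes it below -/
import Mathlib

section
/- In the K-algebra A generated by r,s,t subject to r² = a, rs + sr = b, rt + tr + s² = c, st + ts = d, t² = e (char K ≠ 2), the element ξ = s² − c commutes with r, s, and t; that is, ξ is central in A. -/
/-- In the Haile–Han algebra of a binary quartic, i.e. in any `K`-algebra with elements
`r, s, t` satisfying the five defining relations, the element `ξ = s² − c` commutes
with each of the generators `r`, `s`, `t` (hence is central in the algebra they generate). -/
theorem stmt_3 (K : Type*) [Field K] (hchar : (2 : K) ≠ 0)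
    (a b c d e : K)
    (A : Type*) [Ring A] [Algebra K A] (r s t : A)
    (h1 : r ^ 2 = algebraMap K A a)
    (h2 : r * s + s * r = algebraMap K A b)
    (h3 : r * t + t * r + s ^ 2 = algebraMap K A c)
    (h4 : s * t + t * s = algebraMap K A d)
    (h5 : t ^ 2 = algebraMap K A e) :
    let ξ : A := s ^ 2 - algebraMap K A c
    ξ * r = r * ξ ∧ ξ * s = s * ξ ∧ ξ * t = t * ξ := by
  intro ξ
  have hsr : s * r = algebraMap K A b - r * s := eq_sub_of_add_eq' h2
  have hst : s * t = algebraMap K A d - t * s := eq_sub_of_add_eq h4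
  have key : ∀ x : A, ∀ k : K, s * x = algebraMap K A k - x * s →
      s ^ 2 * x = x * s ^ 2 := by
    intro x k hx
    have : s ^ 2 * x = s * (s * x) := by rw [pow_two, mul_assoc]
    rw [this, hx, mul_sub, ← mul_assoc, hx, sub_mul, pow_two, mul_assoc]
    rw [← Algebra.commutes k s]
    exact sub_sub_cancel _ _
  have hr : s ^ 2 * r = r * s ^ 2 := key r b hsr
  have ht : s ^ 2 * t = t * s ^ 2 := key t d hst
  refine ⟨?_, ?_, ?_⟩
  · simp only [ξ, sub_mul, mul_sub, hr, Algebra.commutes]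
  · simp only [ξ, sub_mul, mul_sub, pow_two, mul_assoc, Algebra.commutes]
  · simp only [ξ, sub_mul, mul_sub, ht, Algebra.commutes]
end

section
/- In the K-algebra A generated by r,s,t subject to r² = a, rs + sr = b, rt + tr + s² = c, st + ts = d, t² = e (char K ≠ 2), the even-degree element u = b − 2rs satisfies u² = (b² − 4ac) − 4a·ξ, where ξ = s² − c. -/
/-- In the Haile–Han algebra of a binary quartic (any `K`-algebra with elements `r, s, t`
satisfying the five defining relations), the even element `u = b − 2 r s` satisfies
`u² = (b² − 4ac) − 4a·ξ`, where `ξ = s² − c` is the central element. -/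
theorem stmt_4 (K : Type*) [Field K] (hchar : (2 : K) ≠ 0)
    (a b c d e : K)
    (A : Type*) [Ring A] [Algebra K A] (r s t : A)
    (h1 : r ^ 2 = algebraMap K A a)
    (h2 : r * s + s * r = algebraMap K A b)
    (h3 : r * t + t * r + s ^ 2 = algebraMap K A c)
    (h4 : s * t + t * s = algebraMap K A d)
    (h5 : t ^ 2 = algebraMap K A e) :
    let ξ : A := s ^ 2 - algebraMap K A c
    (algebraMap K A b - 2 * (r * s)) ^ 2 =
      algebraMap K A (b ^ 2 - 4 * a * c) - algebraMap K A (4 * a) * ξ := by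
  intro ξ
  set B := algebraMap K A b with hB
  set Aa := algebraMap K A a with hAa
  have hsr : s * r = B - r * s := by
    rw [← h2]; noncomm_ring
  have hBc : ∀ y : A, B * y = y * B := fun y => Algebra.commutes b y
  have key : r * s * (r * s) = B * (r * s) - Aa * s ^ 2 := by
    have e1 : r * s * (r * s) = r * (s * r) * s := by noncomm_ring
    rw [e1, hsr, mul_sub, sub_mul, ← hBc r, ← h1]
    noncomm_ring
  have expand : (B - 2 * (r * s)) ^ 2
      = B ^ 2 - 2 * (B * (r * s)) - 2 * ((r * s) * B) + 4 * (r * s * (r * s)) := by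
    noncomm_ring
  rw [expand, key, ← hBc (r * s)]
  have hξ : ξ = s ^ 2 - algebraMap K A c := rfl
  rw [hξ]
  rw [show algebraMap K A (b ^ 2 - 4 * a * c) = B ^ 2 - 4 * (Aa * algebraMap K A c) by
    rw [hB, hAa]; push_cast [map_sub, map_mul, map_pow, map_ofNat]; noncomm_ring,
    show algebraMap K A (4 * a) = 4 * Aa by
    rw [hAa]; push_cast [map_mul, map_ofNat]; noncomm_ring]
  noncomm_ring
end

section
/- Let g_α(x) = (a + c₁α² + α³)x³ + (a₂ + c₂α² + mα)x² + b₁x + b be a real cubic polynomial depending on a parameter α ∈ ℝ, where a, b, a₂, b₁, c₁, c₂, m ∈ ℝ with b ≠ 0 and b·c₂ ≥ 0. Then there exists α₀ ∈ ℝ such that for all α ≥ α₀, g_α has exactly one real root. -/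
open Set Filter

lemma cubic_key (A B C D : ℝ) (hA : 0 < A) (hD : D ≠ 0)
    (hcrit : ∀ t : ℝ, 3*A*t^2 + 2*B*t + C = 0 → 0 < D * (A*t^3 + B*t^2 + C*t + D)) :
    ∃! x : ℝ, A*x^3 + B*x^2 + C*x + D = 0 := by
  set f : ℝ → ℝ := fun x => A*x^3 + B*x^2 + C*x + D with hf
  have hfc : Continuous f := by fun_prop
  have hder : ∀ t : ℝ, HasDerivAt f (3*A*t^2 + 2*B*t + C) t := by
    intro t
    have h := ((((hasDerivAt_pow 3 t).const_mul A).add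
      ((hasDerivAt_pow 2 t).const_mul B)).add ((hasDerivAt_id t).const_mul C)).add_const D
    have h2 : A*(↑(3:ℕ)*t^(3-1)) + B*(↑(2:ℕ)*t^(2-1)) + C*1 = 3*A*t^2 + 2*B*t + C := by
      push_cast; ring
    rw [h2] at h
    exact h
  have hposD : ∀ p q w : ℝ, p < w → w < q → f p = 0 → f q = 0 → 0 < f w → 0 < D := by
    intro p q w hpw hwq hp hq hfw
    obtain ⟨t, htIcc, hmax⟩ := (isCompact_Icc (a := p) (b := q)).exists_isMaxOn
      (Set.nonempty_Icc.2 (by linarith)) hfc.continuousOn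
    have hft : 0 < f t := lt_of_lt_of_le hfw (hmax (Set.mem_Icc.2 ⟨hpw.le, hwq.le⟩))
    have htp : t ≠ p := by rintro rfl; rw [hp] at hft; exact lt_irrefl 0 hft
    have htq : t ≠ q := by rintro rfl; rw [hq] at hft; exact lt_irrefl 0 hft
    have ht1 : p < t := lt_of_le_of_ne (Set.mem_Icc.1 htIcc).1 (Ne.symm htp)
    have ht2 : t < q := lt_of_le_of_ne (Set.mem_Icc.1 htIcc).2 htq
    have hlm : IsLocalMax f t := hmax.isLocalMax (Icc_mem_nhds ht1 ht2)
    have hz : 3*A*t^2 + 2*B*t + C = 0 := hlm.hasDerivAt_eq_zero (hder t)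
    have h1 := hcrit t hz
    have hft' : 0 < A*t^3 + B*t^2 + C*t + D := hft
    by_contra h
    push_neg at h
    nlinarith [mul_nonpos_of_nonpos_of_nonneg h hft'.le]
  have hnegD : ∀ p q w : ℝ, p < w → w < q → f p = 0 → f q = 0 → f w < 0 → D < 0 := by
    intro p q w hpw hwq hp hq hfw
    obtain ⟨t, htIcc, hmin⟩ := (isCompact_Icc (a := p) (b := q)).exists_isMinOn
      (Set.nonempty_Icc.2 (by linarith)) hfc.continuousOn
    have hft : f t < 0 := lt_of_le_of_lt (hmin (Set.mem_Icc.2 ⟨hpw.le, hwq.le⟩)) hfw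
    have htp : t ≠ p := by rintro rfl; rw [hp] at hft; exact lt_irrefl 0 hft
    have htq : t ≠ q := by rintro rfl; rw [hq] at hft; exact lt_irrefl 0 hft
    have ht1 : p < t := lt_of_le_of_ne (Set.mem_Icc.1 htIcc).1 (Ne.symm htp)
    have ht2 : t < q := lt_of_le_of_ne (Set.mem_Icc.1 htIcc).2 htq
    have hlm : IsLocalMin f t := hmin.isLocalMin (Icc_mem_nhds ht1 ht2)
    have hz : 3*A*t^2 + 2*B*t + C = 0 := hlm.hasDerivAt_eq_zero (hder t)
    have h1 := hcrit t hz
    have hft' : A*t^3 + B*t^2 + C*t + D < 0 := hft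
    by_contra h
    push_neg at h
    nlinarith [mul_nonpos_of_nonneg_of_nonpos h hft'.le]
  have huniq : ∀ x y : ℝ, x < y → f x = 0 → f y = 0 → False := by
    intro x y hxy hx hy
    have hx' : A*x^3 + B*x^2 + C*x + D = 0 := hx
    have hy' : A*y^3 + B*y^2 + C*y + D = 0 := hy
    have h2 : A*(x^2+x*y+y^2) + B*(x+y) + C = 0 := by
      have h1 : (y - x) * (A*(x^2+x*y+y^2) + B*(x+y) + C) = 0 := by
        linear_combination hy' - hx'
      rcases mul_eq_zero.1 h1 with h | h
      · exact absurd h (by intro h; linarith)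
      · exact h
    set u : ℝ := B + A*x + A*y with hu
    have hfact : ∀ t : ℝ, f t = (t - x)*(t - y)*(A*t + u) := by
      intro t
      show A*t^3 + B*t^2 + C*t + D = _
      linear_combination (t - x) * h2 + hx'
    have hdfact : ∀ t : ℝ, 3*A*t^2 + 2*B*t + C
        = (t-y)*(A*t+u) + (t-x)*(A*t+u) + A*(t-x)*(t-y) := by
      intro t; linear_combination h2
    rcases lt_trichotomy (A*x + u) 0 with hxu | hxu | hxu
    · rcases lt_trichotomy (A*y + u) 0 with hyu | hyu | hyu
      · -- r > y : f > 0 on (x,y), f < 0 on (y,r)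
        set r : ℝ := -u/A with hr
        have hru : A*r + u = 0 := by rw [hr]; field_simp; ring
        have hyr : y < r := (mul_lt_mul_iff_right₀ hA).1 (by linarith)
        have hfr : f r = 0 := by rw [hfact r, hru]; ring
        have hD1 : 0 < D := by
          refine hposD x y ((x+y)/2) (by linarith) (by linarith) hx hy ?_
          rw [hfact]
          have h1 : 0 < (x+y)/2 - x := by linarith
          have h2' : (x+y)/2 - y < 0 := by linarith
          have h3 : A*((x+y)/2) + u < 0 := by
            have := (mul_lt_mul_iff_right₀ hA).2 (show (x+y)/2 < y by linarith); linarith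
          exact mul_pos_of_neg_of_neg (mul_neg_of_pos_of_neg h1 h2') h3
        have hD2 : D < 0 := by
          refine hnegD y r ((y+r)/2) (by linarith) (by linarith) hy hfr ?_
          rw [hfact]
          have h1 : 0 < (y+r)/2 - x := by linarith
          have h2' : 0 < (y+r)/2 - y := by linarith
          have h3 : A*((y+r)/2) + u < 0 := by
            have := (mul_lt_mul_iff_right₀ hA).2 (show (y+r)/2 < r by linarith); linarith
          exact mul_neg_of_pos_of_neg (mul_pos h1 h2') h3
        linarith
      · -- double root at y
        have hz : 3*A*y^2 + 2*B*y + C = 0 := by rw [hdfact y, hyu]; ring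
        have h1 := hcrit y hz
        rw [show A*y^3 + B*y^2 + C*y + D = f y from rfl, hy] at h1
        simp at h1
      · -- x < r < y
        set r : ℝ := -u/A with hr
        have hru : A*r + u = 0 := by rw [hr]; field_simp; ring
        have hxr : x < r := (mul_lt_mul_iff_right₀ hA).1 (by linarith)
        have hry : r < y := (mul_lt_mul_iff_right₀ hA).1 (by linarith)
        have hfr : f r = 0 := by rw [hfact r, hru]; ring
        have hD1 : 0 < D := by
          refine hposD x r ((x+r)/2) (by linarith) (by linarith) hx hfr ?_
          rw [hfact]
          have h1 : 0 < (x+r)/2 - x := by linarith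
          have h2' : (x+r)/2 - y < 0 := by linarith
          have h3 : A*((x+r)/2) + u < 0 := by
            have := (mul_lt_mul_iff_right₀ hA).2 (show (x+r)/2 < r by linarith); linarith
          exact mul_pos_of_neg_of_neg (mul_neg_of_pos_of_neg h1 h2') h3
        have hD2 : D < 0 := by
          refine hnegD r y ((r+y)/2) (by linarith) (by linarith) hfr hy ?_
          rw [hfact]
          have h1 : 0 < (r+y)/2 - x := by linarith
          have h2' : (r+y)/2 - y < 0 := by linarith
          have h3 : 0 < A*((r+y)/2) + u := by
            have := (mul_lt_mul_iff_right₀ hA).2 (show r < (r+y)/2 by linarith); linarith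
          exact mul_neg_of_neg_of_pos (mul_neg_of_pos_of_neg h1 h2') h3
        linarith
    · -- double root at x
      have hz : 3*A*x^2 + 2*B*x + C = 0 := by rw [hdfact x, hxu]; ring
      have h1 := hcrit x hz
      rw [show A*x^3 + B*x^2 + C*x + D = f x from rfl, hx] at h1
      simp at h1
    · -- r < x : f > 0 on (r,x), f < 0 on (x,y)
      set r : ℝ := -u/A with hr
      have hru : A*r + u = 0 := by rw [hr]; field_simp; ring
      have hrx : r < x := (mul_lt_mul_iff_right₀ hA).1 (by linarith)
      have hfr : f r = 0 := by rw [hfact r, hru]; ring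
      have hD1 : 0 < D := by
        refine hposD r x ((r+x)/2) (by linarith) (by linarith) hfr hx ?_
        rw [hfact]
        have h1 : (r+x)/2 - x < 0 := by linarith
        have h2' : (r+x)/2 - y < 0 := by linarith
        have h3 : 0 < A*((r+x)/2) + u := by
          have := (mul_lt_mul_iff_right₀ hA).2 (show r < (r+x)/2 by linarith); linarith
        exact mul_pos (mul_pos_of_neg_of_neg h1 h2') h3
      have hD2 : D < 0 := by
        refine hnegD x y ((x+y)/2) (by linarith) (by linarith) hx hy ?_
        rw [hfact]
        have h1 : 0 < (x+y)/2 - x := by linarith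
        have h2' : (x+y)/2 - y < 0 := by linarith
        have h3 : 0 < A*((x+y)/2) + u := by
          have := (mul_lt_mul_iff_right₀ hA).2 (show x < (x+y)/2 by linarith); linarith
        exact mul_neg_of_neg_of_pos (mul_neg_of_pos_of_neg h1 h2') h3
      linarith
  -- existence
  obtain ⟨M, hM1, hAM⟩ : ∃ M : ℝ, 1 ≤ M ∧ |B| + |C| + |D| + A ≤ A*M := by
    refine ⟨(|B| + |C| + |D|)/A + 2, ?_, ?_⟩
    · have : 0 ≤ (|B| + |C| + |D|)/A := by positivity
      linarith
    · rw [mul_add, mul_div_cancel₀ _ (ne_of_gt hA)]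
      nlinarith
  have hM2 : M ≤ M^2 := by nlinarith
  have hM21 : 1 ≤ M^2 := by nlinarith
  have hMpos : 0 < f M := by
    show 0 < A*M^3 + B*M^2 + C*M + D
    have hAM3 : (|B| + |C| + |D| + A)*M^2 ≤ A*M^3 := by nlinarith [sq_nonneg M]
    nlinarith [neg_abs_le B, neg_abs_le C, neg_abs_le D, abs_nonneg B, abs_nonneg C,
      abs_nonneg D, mul_le_mul_of_nonneg_left hM2 (abs_nonneg C),
      mul_le_mul_of_nonneg_left hM21 (abs_nonneg D), sq_nonneg M, hA]
  have hMneg : f (-M) < 0 := by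
    show A*(-M)^3 + B*(-M)^2 + C*(-M) + D < 0
    have hAM3 : (|B| + |C| + |D| + A)*M^2 ≤ A*M^3 := by nlinarith [sq_nonneg M]
    nlinarith [neg_abs_le B, le_abs_self B, neg_abs_le C, le_abs_self C,
      neg_abs_le D, le_abs_self D, abs_nonneg B, abs_nonneg C, abs_nonneg D,
      mul_le_mul_of_nonneg_left hM2 (abs_nonneg C),
      mul_le_mul_of_nonneg_left hM21 (abs_nonneg D), sq_nonneg M, hA]
  have hMM : (-M : ℝ) ≤ M := by linarith
  obtain ⟨x0, _, hx0⟩ := intermediate_value_Icc hMM hfc.continuousOn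
    (Set.mem_Icc.2 ⟨hMneg.le, hMpos.le⟩)
  refine ⟨x0, hx0, fun y hy => ?_⟩
  rcases lt_trichotomy y x0 with h | h | h
  · exact absurd (huniq y x0 h hy hx0) (fun h => h)
  · exact h
  · exact absurd (huniq x0 y h hx0 hy) (fun h => h)

set_option maxHeartbeats 1000000 in
/-- For the family of real cubics
`g_α(x) = (a + c₁α² + α³)x³ + (a₂ + c₂α² + mα)x² + b₁x + b` with `b ≠ 0` and `b·c₂ ≥ 0`,
there is an `α₀ ∈ ℝ` such that for every `α ≥ α₀` the cubic `g_α` has exactly one real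
root. -/
theorem stmt_6 (a b a₂ b₁ c₁ c₂ m : ℝ) (hb : b ≠ 0) (hbc : b * c₂ ≥ 0) :
    ∃ α₀ : ℝ, ∀ α : ℝ, α₀ ≤ α →
      ∃! x : ℝ,
        (a + c₁ * α ^ 2 + α ^ 3) * x ^ 3 + (a₂ + c₂ * α ^ 2 + m * α) * x ^ 2
          + b₁ * x + b = 0 := by
  have hb2 : (0:ℝ) < b^2 := by positivity
  obtain ⟨K, hK⟩ : ∃ K : ℝ, K = |c₂| + |m| + |a₂| := ⟨_, rfl⟩
  obtain ⟨K', hK'⟩ : ∃ K' : ℝ, K' = |m| + |a₂| := ⟨_, rfl⟩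
  have hK0 : 0 ≤ K := by rw [hK]; positivity
  have hK'0 : 0 ≤ K' := by rw [hK']; positivity
  obtain ⟨M₂, hM₂0, hM2b⟩ : ∃ M₂ : ℝ, 0 ≤ M₂ ∧ M₂*b^2 = 4*b₁^2*(4*K^2 + 12*|b₁|) := by
    refine ⟨4*b₁^2*(4*K^2 + 12*|b₁|)/b^2, by positivity, ?_⟩
    field_simp
  obtain ⟨M₃, hM₃0, hM3b⟩ : ∃ M₃ : ℝ, 0 ≤ M₃ ∧ M₃*b^2 = |b| * (K'*(4*K'^2 + 12*|b₁|)) := by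
    refine ⟨|b| * (K'*(4*K'^2 + 12*|b₁|))/b^2, ?_, ?_⟩
    · have : 0 ≤ K'*(4*K'^2 + 12*|b₁|) := by positivity
      positivity
    · field_simp
  obtain ⟨M₄, hM₄0, hM4b⟩ : ∃ M₄ : ℝ, 0 ≤ M₄ ∧ (b*c₂ ≠ 0 → b*c₂*M₄ = |b| * K') := by
    refine ⟨|b| * K'/(b*c₂), div_nonneg (by positivity) hbc, fun h => ?_⟩
    field_simp
    exact mul_div_cancel_left₀ K' (right_ne_zero_of_mul h)
  refine ⟨1 + 2*|c₁| + 2*|a| + M₂ + M₃ + M₄, fun α hα => ?_⟩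
  have hc₁0 : 0 ≤ |c₁| := abs_nonneg _
  have ha0 : 0 ≤ |a| := abs_nonneg _
  have h1 : 1 ≤ α := by linarith only [hα, hM₂0, hM₃0, hM₄0, hc₁0, ha0]
  have hα' : 1 + 2*|c₁| + 2*|a| ≤ α := by linarith only [hα, hM₂0, hM₃0, hM₄0]
  have hαM2 : M₂ ≤ α := by linarith only [hα, hM₃0, hM₄0, hc₁0, ha0]
  have hαM3 : M₃ ≤ α := by linarith only [hα, hM₂0, hM₄0, hc₁0, ha0]
  have hαM4 : M₄ ≤ α := by linarith only [hα, hM₂0, hM₃0, hc₁0, ha0]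
  have hαpos : 0 < α := by linarith only [h1]
  have h1sq : 1 ≤ α^2 := by nlinarith only [h1]
  have hαsq : α ≤ α^2 := by nlinarith only [h1, hαpos]
  have h1cube : 1 ≤ α^3 := by nlinarith only [h1, h1sq]
  have h23 : α^2 ≤ α^3 := by nlinarith only [h1, sq_nonneg α]
  have h34 : α^3 ≤ α^4 := by
    have q : 0 ≤ α^3*(α - 1) := mul_nonneg (by positivity) (by linarith only [h1])
    nlinarith only [q]
  set A : ℝ := a + c₁ * α ^ 2 + α ^ 3 with hA
  set B : ℝ := a₂ + c₂ * α ^ 2 + m * α with hB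
  clear_value A B
  have hA1 : α^3 ≤ 2*A := by
    have h := mul_le_mul_of_nonneg_right hα' (sq_nonneg α)
    have hc := mul_le_mul_of_nonneg_right (neg_abs_le c₁) (sq_nonneg α)
    have ha' : -|a| ≤ a := neg_abs_le a
    have h2 : |a| * 1 ≤ |a| * α^2 := mul_le_mul_of_nonneg_left h1sq ha0
    linarith only [h, hc, ha', h2, h1sq, hA]
  have hA2 : A ≤ 2*α^3 := by
    have h := mul_le_mul_of_nonneg_right hα' (sq_nonneg α)
    have hc := mul_le_mul_of_nonneg_right (le_abs_self c₁) (sq_nonneg α)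
    have ha' : a ≤ |a| := le_abs_self a
    have h2 : |a| * 1 ≤ |a| * α^2 := mul_le_mul_of_nonneg_left h1sq ha0
    linarith only [h, hc, ha', h2, h1sq, h23, h1cube, hA]
  have hApos : 0 < A := by linarith only [hA1, h1cube]
  have hα6 : α^6 ≤ 4*A^2 := by
    have q := mul_self_le_mul_self (show (0:ℝ) ≤ α^3 by positivity) hA1
    nlinarith only [q]
  have e1 : |c₂ * α^2| = |c₂| * α^2 := by rw [abs_mul, abs_of_nonneg (sq_nonneg α)]
  have e2 : |m * α| = |m| * α := by rw [abs_mul, abs_of_nonneg hαpos.le]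
  have habsB : |B| ≤ K * α^2 := by
    rw [hB, hK]
    calc |a₂ + c₂ * α ^ 2 + m * α| ≤ |a₂ + c₂ * α ^ 2| + |m * α| := abs_add_le _ _
      _ ≤ |a₂| + |c₂ * α ^ 2| + |m * α| := add_le_add_left (abs_add_le _ _) _
      _ = |a₂| + |c₂| * α^2 + |m| * α := by rw [e1, e2]
      _ ≤ (|c₂| + |m| + |a₂|) * α^2 := by
          have g1 : |a₂| * 1 ≤ |a₂| * α^2 := mul_le_mul_of_nonneg_left h1sq (abs_nonneg a₂)
          have g2 : |m| * α ≤ |m| * α^2 := mul_le_mul_of_nonneg_left hαsq (abs_nonneg m)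
          linarith only [g1, g2]
  have hB2 : B^2 ≤ K^2*α^4 := by
    have q1 := mul_self_le_mul_self (abs_nonneg B) habsB
    have q2 := abs_mul_abs_self B
    nlinarith only [q1, q2]
  have hcrit : ∀ t : ℝ, 3*A*t^2 + 2*B*t + b₁ = 0 →
      0 < b * (A*t^3 + B*t^2 + b₁*t + b) := by
    intro t ht
    have h9e : 9*A^2*t^2 + (3*A*t + 2*B)^2 - 4*B^2 + 6*A*b₁ = 0 := by
      linear_combination 6*A*ht
    have h9 : 9*A^2*t^2 ≤ 4*B^2 - 6*A*b₁ := by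
      linarith only [h9e, sq_nonneg (3*A*t + 2*B)]
    have hs0 : 0 ≤ 4*B^2 - 6*A*b₁ := le_trans (by positivity) h9
    have hAb : -(6*A*b₁) ≤ 12*|b₁| * α^4 := by
      have k1 : 6*A*(-|b₁|) ≤ 6*A*b₁ :=
        mul_le_mul_of_nonneg_left (neg_abs_le b₁) (by linarith only [hApos])
      have k2 : A*|b₁| ≤ 2*α^3*|b₁| := mul_le_mul_of_nonneg_right hA2 (abs_nonneg b₁)
      have k3 : α^3*|b₁| ≤ α^4*|b₁| := mul_le_mul_of_nonneg_right h34 (abs_nonneg b₁)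
      linarith only [k1, k2, k3]
    have hsS : 4*B^2 - 6*A*b₁ ≤ (4*K^2 + 12*|b₁|)*α^4 := by linarith only [hB2, hAb]
    have h4 : 4*b^2*b₁^2*(9*A^2*t^2) ≤ 4*b^2*b₁^2*((4*K^2 + 12*|b₁|)*α^4) :=
      mul_le_mul_of_nonneg_left (h9.trans hsS) (by positivity)
    have key1 : 4*b^2*b₁^2*((4*K^2 + 12*|b₁|)*α^4) ≤ 9*A^2*b^4 := by
      have l1 : M₂ ≤ α^2 := le_trans hαM2 hαsq
      have l2 : M₂*α^4 ≤ α^2*α^4 := mul_le_mul_of_nonneg_right l1 (by positivity)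
      calc 4*b^2*b₁^2*((4*K^2 + 12*|b₁|)*α^4) = (M₂*b^2)*(b^2*α^4) := by
            rw [hM2b]; ring
        _ = (M₂*α^4)*b^4 := by ring
        _ ≤ (α^2*α^4)*b^4 := mul_le_mul_of_nonneg_right l2 (by positivity)
        _ = α^6*b^4 := by ring
        _ ≤ (4*A^2)*b^4 := mul_le_mul_of_nonneg_right hα6 (by positivity)
        _ ≤ 9*A^2*b^4 := by
            have := mul_nonneg (sq_nonneg A) (show (0:ℝ) ≤ b^4 by positivity)
            linarith only [this]
    have hq : 9*A^2*(4*b^2*b₁^2*t^2) ≤ 9*A^2*b^4 := by linarith only [h4, key1]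
    have hq' : 4*b^2*b₁^2*t^2 ≤ b^4 :=
      (mul_le_mul_iff_right₀ (show (0:ℝ) < 9*A^2 by positivity)).1 hq
    have hCt : -(b^2) ≤ 2*b*b₁*t := by
      nlinarith only [sq_nonneg (2*b*b₁*t + b^2), hq', hb2]
    have hBt : -(b^2) ≤ b*B*t^2 := by
      by_cases hc2 : c₂ = 0
      · have hBe : B = a₂ + m*α := by rw [hB, hc2]; ring
        have habsB' : |B| ≤ K' * α := by
          rw [hBe, hK']
          calc |a₂ + m*α| ≤ |a₂| + |m*α| := abs_add_le _ _
            _ = |a₂| + |m| * α := by rw [e2]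
            _ ≤ (|m| + |a₂|)*α := by
                have g1 : |a₂| * 1 ≤ |a₂| * α := mul_le_mul_of_nonneg_left h1 (abs_nonneg a₂)
                linarith only [g1]
        have hB2' : B^2 ≤ K'^2*α^2 := by
          have q1 := mul_self_le_mul_self (abs_nonneg B) habsB'
          have q2 := abs_mul_abs_self B
          nlinarith only [q1, q2]
        have hsS' : 4*B^2 - 6*A*b₁ ≤ (4*K'^2 + 12*|b₁|)*α^3 := by
          have p1 : K'^2*α^2 ≤ K'^2*α^3 := mul_le_mul_of_nonneg_left h23 (by positivity)
          have k1 : 6*A*(-|b₁|) ≤ 6*A*b₁ :=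
            mul_le_mul_of_nonneg_left (neg_abs_le b₁) (by linarith only [hApos])
          have k2 : A*|b₁| ≤ 2*α^3*|b₁| := mul_le_mul_of_nonneg_right hA2 (abs_nonneg b₁)
          linarith only [hB2', p1, k1, k2]
        have hbB : |b*B| ≤ |b| * (K' * α) := by
          rw [abs_mul]; exact mul_le_mul_of_nonneg_left habsB' (abs_nonneg b)
        have key2 : |b*B| * (4*B^2 - 6*A*b₁) ≤ 9*A^2*b^2 := by
          have p1 : |b*B| * (4*B^2 - 6*A*b₁) ≤ (|b| * (K' * α)) * ((4*K'^2 + 12*|b₁|)*α^3) :=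
            mul_le_mul hbB hsS' hs0 (by positivity)
          have l1 : M₃ ≤ α^2 := le_trans hαM3 hαsq
          have l2 : M₃*α^4 ≤ α^2*α^4 := mul_le_mul_of_nonneg_right l1 (by positivity)
          calc |b*B| * (4*B^2 - 6*A*b₁)
              ≤ (|b| * (K'*(4*K'^2 + 12*|b₁|)))*α^4 := p1.trans (le_of_eq (by ring))
            _ = (M₃*b^2)*α^4 := by rw [hM3b]
            _ = (M₃*α^4)*b^2 := by ring
            _ ≤ (α^2*α^4)*b^2 := mul_le_mul_of_nonneg_right l2 (by positivity)
            _ = α^6*b^2 := by ring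
            _ ≤ (4*A^2)*b^2 := mul_le_mul_of_nonneg_right hα6 (by positivity)
            _ ≤ 9*A^2*b^2 := by
                have := mul_nonneg (sq_nonneg A) hb2.le
                linarith only [this]
        have n1 : |b*B| *(9*A^2*t^2) ≤ |b*B| *(4*B^2 - 6*A*b₁) :=
          mul_le_mul_of_nonneg_left h9 (abs_nonneg _)
        have n2 : 9*A^2*(|b*B| *t^2) ≤ 9*A^2*b^2 := by linarith only [n1, key2]
        have n3 : |b*B| *t^2 ≤ b^2 :=
          (mul_le_mul_iff_right₀ (show (0:ℝ) < 9*A^2 by positivity)).1 n2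
        have n4 : -(|b*B|)*t^2 ≤ b*B*t^2 :=
          mul_le_mul_of_nonneg_right (neg_abs_le (b*B)) (sq_nonneg t)
        linarith only [n3, n4]
      · have hbc2 : 0 < b*c₂ := lt_of_le_of_ne hbc (Ne.symm (mul_ne_zero hb hc2))
        have hM4e : b*c₂*M₄ = |b| * K' := hM4b (ne_of_gt hbc2)
        have hbB0 : 0 ≤ b*B := by
          have w1 : (b*c₂*α)*M₄ ≤ (b*c₂*α)*α :=
            mul_le_mul_of_nonneg_left hαM4 (mul_nonneg hbc2.le hαpos.le)
          have w1' : |b| * (|m| + |a₂|)*α ≤ (b*c₂)*(α*α) := by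
            calc |b| * (|m| + |a₂|)*α = (b*c₂*M₄)*α := by rw [hM4e, hK']
              _ = (b*c₂*α)*M₄ := by ring
              _ ≤ (b*c₂*α)*α := w1
              _ = (b*c₂)*(α*α) := by ring
          have w2 : -(|b| * |a₂|) ≤ b*a₂ := by
            have := neg_abs_le (b*a₂); rw [abs_mul] at this; exact this
          have w3 : -(|b| * |m|)*α ≤ (b*m)*α := by
            refine mul_le_mul_of_nonneg_right ?_ hαpos.le
            have := neg_abs_le (b*m); rw [abs_mul] at this; exact this
          have w4 : (|b| * |a₂|)*1 ≤ (|b| * |a₂|)*α :=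
            mul_le_mul_of_nonneg_left h1 (mul_nonneg (abs_nonneg b) (abs_nonneg a₂))
          have hBe : b*B = b*a₂ + (b*c₂)*α^2 + (b*m)*α := by rw [hB]; ring
          rw [hBe]
          linarith only [w1', w2, w3, w4]
        have := mul_nonneg hbB0 (sq_nonneg t)
        linarith only [this, hb2]
    have hfin : 3*(b*(A*t^3 + B*t^2 + b₁*t + b)) = b*B*t^2 + 2*b*b₁*t + 3*b^2 := by
      linear_combination b*t*ht
    linarith only [hfin, hBt, hCt, hb2]
  exact cubic_key A B b₁ b hApos hb hcrit
end

section
/- Let E and F be abelian group objects (abelian varieties) with a common finite subgroup Δ embedded diagonally in E × F, let A = (E × F)/Δ, E' = A/F, F' = A/E, and let φ: E → E' and ψ: F → F' be the induced isogenies with kernel Δ. Then (abstract group-theoretic version) for G-modules: if 0 → E → A → F' → 0 is exact and φ factors as E → A → E' with ker φ = Δ, and if E'(K)/φE(K) = 0, then the natural map F'(K)/ψF(K) → ker(H¹(K,E) → H¹(K,A)) is an isomorphism. -/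
/-- Fisher's Lemma 2.1 in the language of `G`-modules.  Given a commutative diagram of
`G`-modules with exact row `0 → E →^{ιE} A →^{pr} F' → 0` and exact column
`0 → F →^{ιF} A →^{prE} E' → 0`, and diagonal isogenies `φ = prE ∘ ιE : E → E'` and
`ψ = pr ∘ ιF : F → F'`, suppose `E'^G = φ(E^G)`.  Then the natural map
`F'^G/ψ(F^G) → Vis_A H¹(G,E) := ker(H¹(G,E) → H¹(G,A))` is an isomorphism.  This is
stated at the level of `1`-cocycles: (1) each invariant `y ∈ F'^G`, via a lift `a ∈ A`,
determines a `1`-cocycle of `E` whose image in `A` is the coboundary of `a`;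
(2) this cocycle is a coboundary in `E` iff `y ∈ ψ(F^G)` (injectivity);
(3) every `1`-cocycle of `E` that becomes a coboundary in `A` arises this way
(surjectivity onto the visible subgroup). -/
theorem stmt_17 (G E A F E' F' : Type*) [Group G]
    [AddCommGroup E] [AddCommGroup A] [AddCommGroup F]
    [AddCommGroup E'] [AddCommGroup F']
    [DistribMulAction G E] [DistribMulAction G A] [DistribMulAction G F]
    [DistribMulAction G E'] [DistribMulAction G F']
    (ιE : E →+ A) (pr : A →+ F') (ιF : F →+ A) (prE : A →+ E')
    (hιEG : ∀ (g : G) (x : E), ιE (g • x) = g • ιE x)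
    (hprG : ∀ (g : G) (x : A), pr (g • x) = g • pr x)
    (hιFG : ∀ (g : G) (x : F), ιF (g • x) = g • ιF x)
    (hprEG : ∀ (g : G) (x : A), prE (g • x) = g • prE x)
    (hιEinj : Function.Injective ιE) (hprsurj : Function.Surjective pr)
    (hrow : ∀ x : A, pr x = 0 ↔ ∃ e : E, ιE e = x)
    (hιFinj : Function.Injective ιF) (hprEsurj : Function.Surjective prE)
    (hcol : ∀ x : A, prE x = 0 ↔ ∃ y : F, ιF y = x)
    -- hypothesis `E'(K)/φE(K) = 0`, i.e. `E'^G = φ(E^G)` where `φ = prE ∘ ιE`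
    (hE' : ∀ e' : E', (∀ g : G, g • e' = e') →
      ∃ e : E, (∀ g : G, g • e = e) ∧ prE (ιE e) = e') :
    -- (1) well-definedness of the map `F'^G → Vis_A H¹(G,E)`
    (∀ y : F', (∀ g : G, g • y = y) → ∀ a : A, pr a = y →
      ∃ f : G → E, (∀ g : G, ιE (f g) = g • a - a) ∧
        ∀ g h : G, f (g * h) = f g + g • f h) ∧
    -- (2) injectivity: the cocycle attached to `y` is a coboundary in `E`
    --     iff `y` lies in `ψ(F^G)`, where `ψ = pr ∘ ιF`
    (∀ y : F', (∀ g : G, g • y = y) → ∀ a : A, pr a = y →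
      ∀ f : G → E, (∀ g : G, ιE (f g) = g • a - a) →
        ((∃ e : E, ∀ g : G, f g = g • e - e) ↔
          ∃ x : F, (∀ g : G, g • x = x) ∧ pr (ιF x) = y)) ∧
    -- (3) surjectivity onto `ker(H¹(G,E) → H¹(G,A))`
    (∀ f : G → E, (∀ g h : G, f (g * h) = f g + g • f h) →
      (∃ a : A, ∀ g : G, ιE (f g) = g • a - a) →
        ∃ y : F', (∀ g : G, g • y = y) ∧
          ∃ a : A, pr a = y ∧ ∀ g : G, ιE (f g) = g • a - a) := by
  have hprιE : ∀ e : E, pr (ιE e) = 0 := fun e => (hrow (ιE e)).mpr ⟨e, rfl⟩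
  refine ⟨?_, ?_, ?_⟩
  · -- (1)
    intro y hy a ha
    have hf : ∀ g : G, ∃ e : E, ιE e = g • a - a := by
      intro g
      refine (hrow _).mp ?_
      rw [map_sub, hprG, ha, hy, sub_self]
    choose f hfa using hf
    refine ⟨f, hfa, fun g h => ?_⟩
    apply hιEinj
    rw [map_add, hfa, hιEG, hfa, hfa, mul_smul, smul_sub]
    abel
  · -- (2)
    intro y hy a ha f hfa
    constructor
    · rintro ⟨e, he⟩
      set b := a - ιE e with hb
      have hbinv : ∀ g : G, g • b = b := by
        intro g
        have h1 := hfa g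
        rw [he g, map_sub, hιEG] at h1
        have h2 : g • a = g • ιE e - ιE e + a := sub_eq_iff_eq_add.mp h1.symm
        rw [hb, smul_sub, h2]; abel
      obtain ⟨e₀, he₀inv, he₀⟩ := hE' (prE b) (fun g => by rw [← hprEG, hbinv])
      have : ∃ x : F, ιF x = b - ιE e₀ := by
        refine (hcol _).mp ?_
        rw [map_sub, he₀, sub_self]
      obtain ⟨x, hx⟩ := this
      refine ⟨x, fun g => hιFinj ?_, ?_⟩
      · rw [hιFG, hx, smul_sub, hbinv, ← hιEG, he₀inv]
      · rw [hx, map_sub, hprιE, sub_zero, hb, map_sub, hprιE, sub_zero, ha]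
    · rintro ⟨x, hxinv, hxy⟩
      have : ∃ e : E, ιE e = a - ιF x := by
        refine (hrow _).mp ?_
        rw [map_sub, ha, hxy, sub_self]
      obtain ⟨e, he⟩ := this
      refine ⟨e, fun g => hιEinj ?_⟩
      rw [hfa, map_sub, hιEG, he, smul_sub, ← hιFG, hxinv]
      abel
  · -- (3)
    rintro f hcoc ⟨a, hfa⟩
    refine ⟨pr a, fun g => ?_, a, rfl, hfa⟩
    rw [← hprG]
    have : g • a - a = ιE (f g) := (hfa g).symm
    have h2 : g • a = a + ιE (f g) := by rw [← this]; abel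
    rw [h2, map_add, hprιE, add_zero]
end
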